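/- arXiv:1112.4549 — 3 statements merged into one kernel-verified Lean document; each statement's English description precedes it below -/
import Mathlib

section
/- Let Λ be a row-finite locally convex k-graph with Λ⁰ finite. Suppose that Λ contains at least one cycle and that no cycle in Λ has an entrance. Then there exists a cycle τ in Λ such that r(τ)Λ^{e_i} = ∅ whenever d(τ)_i = 0, and such that r(τ)Λ^{≤∞} = {τ^∞}; in particular σ^{d(τ)}(x) = x for every x ∈ r(τ)Λ^{≤∞}. -/
open scoped ComplexOrder ENat

/-- A higher-rank graph (`k`-graph): a countable small category `Λ` together with a degree
functor `d : Λ → ℕᵏ` satisfying the unique factorisation property.  Morphisms ("paths") form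
the type `Path`; vertices are identified with the paths of degree `0`.  Composition is encoded
as a total function `comp` whose axioms only apply to composable pairs (`s μ = r ν`). -/
structure KGraph (k : ℕ) : Type 1 where
  Path : Type
  countable : Countable Path
  d : Path → Fin k → ℕ
  r : Path → Path
  s : Path → Path
  comp : Path → Path → Path
  d_r : ∀ lam, d (r lam) = 0
  d_s : ∀ lam, d (s lam) = 0
  r_vertex : ∀ v, d v = 0 → r v = v
  s_vertex : ∀ v, d v = 0 → s v = v
  r_comp : ∀ mu nu, s mu = r nu → r (comp mu nu) = r mu
  s_comp : ∀ mu nu, s mu = r nu → s (comp mu nu) = s nu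
  d_comp : ∀ mu nu, s mu = r nu → d (comp mu nu) = d mu + d nu
  comp_assoc : ∀ lam mu nu, s lam = r mu → s mu = r nu →
    comp (comp lam mu) nu = comp lam (comp mu nu)
  id_comp : ∀ lam, comp (r lam) lam = lam
  comp_id : ∀ lam, comp lam (s lam) = lam
  factor : ∀ (lam : Path) (m n : Fin k → ℕ), d lam = m + n →
    ∃! p : Path × Path, d p.1 = m ∧ d p.2 = n ∧ s p.1 = r p.2 ∧ comp p.1 p.2 = lam

namespace KGraph

variable {k : ℕ} (Λ : KGraph k)

/-- `v` is a vertex, i.e. a path of degree `0`. -/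
def IsVertex (v : Λ.Path) : Prop := Λ.d v = 0

/-- The set of minimal common extensions of `mu` and `nu`. -/
def MCE (mu nu : Λ.Path) : Set Λ.Path :=
  {lam | Λ.d lam = Λ.d mu ⊔ Λ.d nu ∧
    (∃ α, Λ.s mu = Λ.r α ∧ Λ.comp mu α = lam) ∧
    (∃ β, Λ.s nu = Λ.r β ∧ Λ.comp nu β = lam)}

/-- Pairs `(α, β)` with `μα = νβ ∈ MCE (μ, ν)`. -/
def MCEPairs (mu nu : Λ.Path) : Set (Λ.Path × Λ.Path) :=
  {p | Λ.s mu = Λ.r p.1 ∧ Λ.s nu = Λ.r p.2 ∧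
    Λ.comp mu p.1 = Λ.comp nu p.2 ∧ Λ.comp mu p.1 ∈ Λ.MCE mu nu}

/-- `Λ` is finitely aligned if all sets of minimal common extensions are finite. -/
def FinitelyAligned : Prop := ∀ mu nu : Λ.Path, (Λ.MCE mu nu).Finite

/-- `Λ` is row-finite if `vΛⁿ` is finite for every vertex `v` and `n ∈ ℕᵏ`. -/
def RowFinite : Prop :=
  ∀ (v : Λ.Path) (n : Fin k → ℕ), Λ.IsVertex v → {lam | Λ.r lam = v ∧ Λ.d lam = n}.Finite

/-- `Λ` is locally convex. -/
def LocallyConvex : Prop :=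
  ∀ i j : Fin k, i ≠ j → ∀ mu : Λ.Path, Λ.d mu = Pi.single i 1 →
    (∃ e, Λ.r e = Λ.r mu ∧ Λ.d e = Pi.single j 1) →
    ∃ e, Λ.r e = Λ.s mu ∧ Λ.d e = Pi.single j 1

/-- A subset `F ⊆ vΛ` is exhaustive if every `λ ∈ vΛ` has a common extension with some
member of `F`. -/
def Exhaustive (v : Λ.Path) (F : Set Λ.Path) : Prop :=
  ∀ lam, Λ.r lam = v → ∃ mu ∈ F, (Λ.MCE lam mu).Nonempty

/-- A generalised cycle: a pair of distinct paths `μ ≠ ν` with the same range and source such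
that every extension of `μ` has a common extension with `ν`. -/
def IsGenCycle (mu nu : Λ.Path) : Prop :=
  mu ≠ nu ∧ Λ.s mu = Λ.s nu ∧ Λ.r mu = Λ.r nu ∧
    ∀ τ, Λ.r τ = Λ.s mu → (Λ.MCE (Λ.comp mu τ) nu).Nonempty

/-- An entrance to the generalised cycle `(μ, ν)`. -/
def IsEntrance (mu nu τ : Λ.Path) : Prop :=
  Λ.r τ = Λ.s nu ∧ Λ.MCE (Λ.comp nu τ) mu = ∅

/-- A (conventional) cycle: a path of nonzero degree whose range and source coincide. -/
def IsCycle (lam : Λ.Path) : Prop := Λ.d lam ≠ 0 ∧ Λ.r lam = Λ.s lam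

/-- `Λ` contains no (conventional) cycles. -/
def NoCycles : Prop := ∀ lam : Λ.Path, Λ.r lam = Λ.s lam → Λ.d lam = 0

/-- A vertex `v` with `vΛ = {v}`. -/
def IsSource (v : Λ.Path) : Prop :=
  Λ.IsVertex v ∧ ∀ lam, Λ.r lam = v → lam = v

/-- `Ext (μ; E)`. -/
def Ext (mu : Λ.Path) (E : Set Λ.Path) : Set Λ.Path :=
  {τ | Λ.r τ = Λ.s mu ∧ ∃ nu ∈ E, Λ.comp mu τ ∈ Λ.MCE mu nu}

/-- No cycle in `Λ` has an entrance. -/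
def NoCycleHasEntrance : Prop :=
  ∀ lam, Λ.IsCycle lam → ∀ τ, Λ.r τ = Λ.r lam → (Λ.MCE τ lam).Nonempty

/-- `x` encodes a path of degree `m ∈ (ℕ ∪ {∞})ᵏ` in `Λ`, i.e. a degree-preserving functor
`Ω_{k,m} → Λ`, recorded as a total function on pairs `(p, q)`; only the values with
`p ≤ q ≤ m` are constrained. -/
def IsPathFun (m : Fin k → ℕ∞) (x : (Fin k → ℕ) → (Fin k → ℕ) → Λ.Path) : Prop :=
  (∀ p q : Fin k → ℕ, p ≤ q → (∀ i, (q i : ℕ∞) ≤ m i) → Λ.d (x p q) = q - p) ∧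
  (∀ p q : Fin k → ℕ, p ≤ q → (∀ i, (q i : ℕ∞) ≤ m i) →
    Λ.r (x p q) = x p p ∧ Λ.s (x p q) = x q q) ∧
  (∀ p q u : Fin k → ℕ, p ≤ q → q ≤ u → (∀ i, (u i : ℕ∞) ≤ m i) →
    Λ.comp (x p q) (x q u) = x p u)

/-- `x` is a boundary path of degree `m`. -/
def IsBoundaryFun (m : Fin k → ℕ∞) (x : (Fin k → ℕ) → (Fin k → ℕ) → Λ.Path) : Prop :=
  Λ.IsPathFun m x ∧
  ∀ p : Fin k → ℕ, (∀ i, (p i : ℕ∞) ≤ m i) →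
    ∀ E : Set Λ.Path, E.Finite → (∀ lam ∈ E, Λ.r lam = x p p) → Λ.Exhaustive (x p p) E →
      ∃ mu ∈ E, (∀ i, ((p i + Λ.d mu i : ℕ) : ℕ∞) ≤ m i) ∧ x p (p + Λ.d mu) = mu

/-- A path function `x` of degree `m` belongs to `Λ^{≤∞}`. -/
def IsLeInftyPath (m : Fin k → ℕ∞) (x : (Fin k → ℕ) → (Fin k → ℕ) → Λ.Path) : Prop :=
  Λ.IsPathFun m x ∧
  ∀ n : Fin k → ℕ, (∀ i, (n i : ℕ∞) ≤ m i) → ∀ i, (n i : ℕ∞) = m i →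
    ∀ e, ¬(Λ.r e = x n n ∧ Λ.d e = Pi.single i 1)

/-- The degree of `τ^∞` for a cycle (or initial cycle) `τ`: `∞` in the coordinates where
`d τ` is nonzero, `0` elsewhere. -/
def degInf (τ : Λ.Path) : Fin k → ℕ∞ := fun i => if Λ.d τ i = 0 then 0 else ⊤

/-- An initial cycle: `r μ = s μ` and `r(μ)Λ^{eᵢ} = ∅` whenever `d(μ)ᵢ = 0`. -/
def IsInitialCycle (mu : Λ.Path) : Prop :=
  Λ.r mu = Λ.s mu ∧
  ∀ i, Λ.d mu i = 0 → ∀ e, ¬(Λ.r e = Λ.r mu ∧ Λ.d e = Pi.single i 1)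

/-- `x` is (the path function of) `μ^∞` for the initial cycle `μ`. -/
def IsInfIterate (mu : Λ.Path) (x : (Fin k → ℕ) → (Fin k → ℕ) → Λ.Path) : Prop :=
  Λ.IsPathFun (Λ.degInf mu) x ∧ x 0 0 = Λ.r mu ∧
    ∀ n : ℕ, x (n • Λ.d mu) ((n + 1) • Λ.d mu) = mu

/-- Membership in `Λ^{≤ n}`. -/
def LePath (n : Fin k → ℕ) (lam : Λ.Path) : Prop :=
  Λ.d lam ≤ n ∧
    ∀ i, Λ.d lam i < n i → ∀ e, ¬(Λ.r e = Λ.s lam ∧ Λ.d e = Pi.single i 1)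

/-- Minimal common extensions computed inside a subset `S` of `Λ` (all data lying in `S`). -/
def MCEWithin (S : Set Λ.Path) (mu nu : Λ.Path) : Set Λ.Path :=
  {lam | lam ∈ S ∧ Λ.d lam = Λ.d mu ⊔ Λ.d nu ∧
    (∃ α ∈ S, Λ.s mu = Λ.r α ∧ Λ.comp mu α = lam) ∧
    (∃ β ∈ S, Λ.s nu = Λ.r β ∧ Λ.comp nu β = lam)}

/-- Generalised cycles of the sub-`k`-graph determined by a subset `S` of `Λ`. -/
def IsGenCycleWithin (S : Set Λ.Path) (mu nu : Λ.Path) : Prop :=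
  mu ≠ nu ∧ Λ.s mu = Λ.s nu ∧ Λ.r mu = Λ.r nu ∧
    ∀ τ ∈ S, Λ.r τ = Λ.s mu → (Λ.MCEWithin S (Λ.comp mu τ) nu).Nonempty

end KGraph

/-- A Cuntz–Krieger `Λ`-family in a `*`-ring `B`: (CK1) the vertex elements are mutually
orthogonal projections, (CK2) multiplicativity, (CK3) the Cuntz–Krieger relation for
`t_μ* t_ν`, and (CK4) the exhaustivity relation (stated for an arbitrary ordering of the
finite exhaustive set). -/
structure CKFamily {k : ℕ} (Λ : KGraph k) (B : Type*) [NonUnitalRing B] [StarRing B] where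
  t : Λ.Path → B
  selfadjoint : ∀ v, Λ.IsVertex v → star (t v) = t v
  idem : ∀ v, Λ.IsVertex v → t v * t v = t v
  orth : ∀ v w, Λ.IsVertex v → Λ.IsVertex w → v ≠ w → t v * t w = 0
  mul_eq : ∀ mu nu, Λ.s mu = Λ.r nu → t mu * t nu = t (Λ.comp mu nu)
  ck3 : ∀ mu nu, star (t mu) * t nu = ∑ᶠ p ∈ Λ.MCEPairs mu nu, t p.1 * star (t p.2)
  ck4 : ∀ v, Λ.IsVertex v → ∀ (a : Λ.Path) (l : List Λ.Path), (a :: l).Nodup →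
    (∀ lam ∈ a :: l, Λ.r lam = v) → Λ.Exhaustive v {lam | lam ∈ a :: l} →
    (l.map fun lam => t v - t lam * star (t lam)).foldl (· * ·)
      (t v - t a * star (t a)) = 0

/-- A C*-algebra is AF (approximately finite-dimensional) if it contains an increasing
sequence of finite-dimensional `*`-subalgebras whose union is dense. -/
def IsAF (A : Type*) [NonUnitalNormedRing A] [StarRing A] [NormedSpace ℂ A] : Prop :=
  ∃ S : ℕ → NonUnitalStarSubalgebra ℂ A, Monotone S ∧
    (∀ n, FiniteDimensional ℂ (S n)) ∧ Dense (⋃ n, (S n : Set A))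

/-- A closed `*`-subalgebra of `A`, presented as a subset `S`, is AF if it contains an
increasing sequence of finite-dimensional `*`-subalgebras of `A` whose union is dense in `S`. -/
def IsAFIn (A : Type*) [NonUnitalNormedRing A] [StarRing A] [NormedSpace ℂ A]
    (S : Set A) : Prop :=
  ∃ T : ℕ → NonUnitalStarSubalgebra ℂ A, Monotone T ∧ (∀ n, (T n : Set A) ⊆ S) ∧
    (∀ n, FiniteDimensional ℂ (T n)) ∧ ∀ x ∈ S, x ∈ closure (⋃ n, (T n : Set A))

namespace KGraph

variable {k : ℕ} (Λ : KGraph k)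

/-! ### Factorisations -/

lemma sub_add_of_le {m n : Fin k → ℕ} (h : m ≤ n) : m + (n - m) = n := by
  funext i
  have h1 : m i ≤ n i := h i
  simp only [Pi.add_apply, Pi.sub_apply]
  omega

/-- The canonical factorisation of `lam` into a first piece of degree `m` and the rest. -/
noncomputable def fac (lam : Λ.Path) (m : Fin k → ℕ) : Λ.Path × Λ.Path :=
  (Λ.factor lam (m ⊓ Λ.d lam) (Λ.d lam - m)
    (by funext i; simp only [Pi.add_apply, Pi.sub_apply, Pi.inf_apply]; omega)
    ).exists.choose

variable {Λ}

lemma fac_spec' (lam : Λ.Path) (m : Fin k → ℕ) :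
    Λ.d (Λ.fac lam m).1 = m ⊓ Λ.d lam ∧ Λ.d (Λ.fac lam m).2 = Λ.d lam - m ∧
      Λ.s (Λ.fac lam m).1 = Λ.r (Λ.fac lam m).2 ∧
      Λ.comp (Λ.fac lam m).1 (Λ.fac lam m).2 = lam :=
  (Λ.factor lam (m ⊓ Λ.d lam) (Λ.d lam - m)
    (by funext i; simp only [Pi.add_apply, Pi.sub_apply, Pi.inf_apply]; omega)
    ).exists.choose_spec

lemma fac_spec {lam : Λ.Path} {m : Fin k → ℕ} (h : m ≤ Λ.d lam) :
    Λ.d (Λ.fac lam m).1 = m ∧ Λ.d (Λ.fac lam m).2 = Λ.d lam - m ∧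
      Λ.s (Λ.fac lam m).1 = Λ.r (Λ.fac lam m).2 ∧
      Λ.comp (Λ.fac lam m).1 (Λ.fac lam m).2 = lam := by
  have hs := fac_spec' (Λ := Λ) lam m
  rwa [inf_eq_left.mpr h] at hs

lemma fac_d1 {lam : Λ.Path} {m : Fin k → ℕ} (h : m ≤ Λ.d lam) :
    Λ.d (Λ.fac lam m).1 = m := (fac_spec h).1

lemma fac_d2 {lam : Λ.Path} {m : Fin k → ℕ} (h : m ≤ Λ.d lam) :
    Λ.d (Λ.fac lam m).2 = Λ.d lam - m := (fac_spec h).2.1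

lemma fac_s1 {lam : Λ.Path} {m : Fin k → ℕ} (h : m ≤ Λ.d lam) :
    Λ.s (Λ.fac lam m).1 = Λ.r (Λ.fac lam m).2 := (fac_spec h).2.2.1

lemma fac_comp {lam : Λ.Path} {m : Fin k → ℕ} (h : m ≤ Λ.d lam) :
    Λ.comp (Λ.fac lam m).1 (Λ.fac lam m).2 = lam := (fac_spec h).2.2.2

/-- Uniqueness of factorisations. -/
lemma fac_unique {lam mu nu : Λ.Path} {m : Fin k → ℕ}
    (hd : Λ.d mu = m) (hs : Λ.s mu = Λ.r nu) (hc : Λ.comp mu nu = lam) :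
    Λ.fac lam m = (mu, nu) := by
  have hdl : Λ.d lam = Λ.d mu + Λ.d nu := by rw [← hc]; exact Λ.d_comp mu nu hs
  have h : m ≤ Λ.d lam := by
    intro i; rw [hdl, ← hd]; simp
  have hnu : Λ.d nu = Λ.d lam - m := by
    funext i
    have h1 := congrFun hdl i
    have h2 := congrFun hd i
    simp only [Pi.add_apply, Pi.sub_apply] at *
    omega
  have hu := Λ.factor lam m (Λ.d lam - m) (sub_add_of_le h).symm
  exact hu.unique (fac_spec h) (y₂ := (mu, nu)) ⟨hd, hnu, hs, hc⟩

lemma r_fac1 {lam : Λ.Path} {m : Fin k → ℕ} (h : m ≤ Λ.d lam) :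
    Λ.r (Λ.fac lam m).1 = Λ.r lam := by
  conv_rhs => rw [← fac_comp h]
  rw [Λ.r_comp _ _ (fac_s1 h)]

lemma s_fac2 {lam : Λ.Path} {m : Fin k → ℕ} (h : m ≤ Λ.d lam) :
    Λ.s (Λ.fac lam m).2 = Λ.s lam := by
  conv_rhs => rw [← fac_comp h]
  rw [Λ.s_comp _ _ (fac_s1 h)]

lemma fac_zero (lam : Λ.Path) : Λ.fac lam 0 = (Λ.r lam, lam) := by
  refine fac_unique (Λ.d_r lam) ?_ (Λ.id_comp lam)
  rw [Λ.s_vertex _ (Λ.d_r lam)]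

lemma fac_top (lam : Λ.Path) : Λ.fac lam (Λ.d lam) = (lam, Λ.s lam) := by
  refine fac_unique rfl ?_ (Λ.comp_id lam)
  rw [Λ.r_vertex _ (Λ.d_s lam)]

/-! ### Segments -/

variable (Λ) in
/-- The segment `lam(p, q)` of a path. -/
noncomputable def seg (lam : Λ.Path) (p q : Fin k → ℕ) : Λ.Path :=
  (Λ.fac (Λ.fac lam q).1 p).2

section seglemmas

variable {lam : Λ.Path} {p q u : Fin k → ℕ}

lemma seg_zero_left (hq : q ≤ Λ.d lam) : Λ.seg lam 0 q = (Λ.fac lam q).1 := by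
  rw [seg, fac_zero]

lemma seg_self (hp : p ≤ Λ.d lam) : Λ.seg lam p p = Λ.s (Λ.fac lam p).1 := by
  rw [seg]
  set A := (Λ.fac lam p).1 with hA
  have hd : Λ.d A = p := fac_d1 hp
  rw [← hd, fac_top]

lemma seg_d (hpq : p ≤ q) (hq : q ≤ Λ.d lam) : Λ.d (Λ.seg lam p q) = q - p := by
  rw [seg, fac_d2 (by rw [fac_d1 hq]; exact hpq), fac_d1 hq]

/-- Initial segments of initial segments, and the induced tail relation. -/
lemma fac1_fac1 (hpq : p ≤ q) (hq : q ≤ Λ.d lam) :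
    (Λ.fac (Λ.fac lam q).1 p).1 = (Λ.fac lam p).1 ∧
      (Λ.fac lam p).2 = Λ.comp (Λ.seg lam p q) (Λ.fac lam q).2 := by
  have hpA : p ≤ Λ.d (Λ.fac lam q).1 := by rw [fac_d1 hq]; exact hpq
  set A := (Λ.fac lam q).1 with hA
  set B := (Λ.fac lam q).2 with hB
  set C := (Λ.fac A p).1 with hC
  set D := (Λ.fac A p).2 with hD
  have hsD : Λ.s D = Λ.r B := by rw [hD, s_fac2 hpA, hA, fac_s1 hq]
  have hsC : Λ.s C = Λ.r (Λ.comp D B) := by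
    rw [Λ.r_comp _ _ hsD, hC, fac_s1 hpA]
  have hcomp : Λ.comp C (Λ.comp D B) = lam := by
    rw [← Λ.comp_assoc _ _ _ (fac_s1 hpA) hsD, fac_comp hpA, fac_comp hq]
  have := fac_unique (fac_d1 hpA) hsC hcomp
  refine ⟨(congrArg Prod.fst this).symm, ?_⟩
  exact congrArg Prod.snd this

lemma seg_trunc (hpq : p ≤ q) (hqu : q ≤ u) (hu : u ≤ Λ.d lam) :
    Λ.seg lam p q = Λ.seg (Λ.fac lam u).1 p q := by
  rw [seg, seg, (fac1_fac1 hqu hu).1]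

lemma seg_comp_fac2 (hpq : p ≤ q) (hq : q ≤ Λ.d lam) :
    Λ.comp (Λ.seg lam p q) (Λ.fac lam q).2 = (Λ.fac lam p).2 :=
  ((fac1_fac1 hpq hq).2).symm

lemma s_seg (hpq : p ≤ q) (hq : q ≤ Λ.d lam) :
    Λ.s (Λ.seg lam p q) = Λ.seg lam q q := by
  have hpA : p ≤ Λ.d (Λ.fac lam q).1 := by rw [fac_d1 hq]; exact hpq
  rw [seg, s_fac2 hpA, seg_self hq]

lemma r_seg (hpq : p ≤ q) (hq : q ≤ Λ.d lam) :
    Λ.r (Λ.seg lam p q) = Λ.seg lam p p := by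
  have hpA : p ≤ Λ.d (Λ.fac lam q).1 := by rw [fac_d1 hq]; exact hpq
  rw [seg, ← fac_s1 hpA, (fac1_fac1 hpq hq).1, seg_self (le_trans hpq hq)]

lemma r_seg_zero (hq : q ≤ Λ.d lam) : Λ.r (Λ.seg lam 0 q) = Λ.r lam := by
  rw [seg_zero_left hq, r_fac1 hq]

lemma seg_comp (hpq : p ≤ q) (hqu : q ≤ u) (hu : u ≤ Λ.d lam) :
    Λ.comp (Λ.seg lam p q) (Λ.seg lam q u) = Λ.seg lam p u := by
  have hqA : q ≤ Λ.d (Λ.fac lam u).1 := by rw [fac_d1 hu]; exact hqu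
  rw [seg_trunc hpq hqu hu]
  exact seg_comp_fac2 hpq hqA

lemma seg_comp_left {mu nu : Λ.Path} (hs : Λ.s mu = Λ.r nu) (hq : q ≤ Λ.d mu) :
    Λ.seg (Λ.comp mu nu) p q = Λ.seg mu p q := by
  have hd : Λ.d (Λ.comp mu nu) = Λ.d mu + Λ.d nu := Λ.d_comp mu nu hs
  have hql : q ≤ Λ.d (Λ.comp mu nu) := by
    rw [hd]; intro i; exact le_trans (hq i) (by simp)
  have hsq : Λ.s (Λ.fac mu q).1 = Λ.r (Λ.comp (Λ.fac mu q).2 nu) := by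
    rw [Λ.r_comp _ _ (by rw [s_fac2 hq]; exact hs), fac_s1 hq]
  have hc : Λ.comp (Λ.fac mu q).1 (Λ.comp (Λ.fac mu q).2 nu) = Λ.comp mu nu := by
    rw [← Λ.comp_assoc _ _ _ (fac_s1 hq) (by rw [s_fac2 hq]; exact hs), fac_comp hq]
  have := fac_unique (fac_d1 hq) hsq hc
  rw [seg, seg, congrArg Prod.fst this]

lemma seg_shift {mu nu : Λ.Path} (hs : Λ.s mu = Λ.r nu) (hpq : p ≤ q) (hq : q ≤ Λ.d nu) :
    Λ.seg (Λ.comp mu nu) (Λ.d mu + p) (Λ.d mu + q) = Λ.seg nu p q := by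
  set C := (Λ.fac nu q).1 with hC
  set D := (Λ.fac nu q).2 with hD
  have hsmuC : Λ.s mu = Λ.r C := by rw [hs, ← r_fac1 hq]
  have h1 : (Λ.fac (Λ.comp mu nu) (Λ.d mu + q)).1 = Λ.comp mu C := by
    have := fac_unique (lam := Λ.comp mu nu) (mu := Λ.comp mu C) (nu := D)
      (by rw [Λ.d_comp _ _ hsmuC, fac_d1 hq])
      (by rw [Λ.s_comp _ _ hsmuC]; exact fac_s1 hq)
      (by rw [Λ.comp_assoc _ _ _ hsmuC (fac_s1 hq), fac_comp hq])
    exact congrArg Prod.fst this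
  have hpC : p ≤ Λ.d C := by rw [hC, fac_d1 hq]; exact hpq
  have h2 : (Λ.fac (Λ.comp mu C) (Λ.d mu + p)).2 = (Λ.fac C p).2 := by
    have hsm : Λ.s mu = Λ.r (Λ.fac C p).1 := by rw [hsmuC, r_fac1 hpC]
    have := fac_unique (lam := Λ.comp mu C) (mu := Λ.comp mu (Λ.fac C p).1)
      (nu := (Λ.fac C p).2)
      (by rw [Λ.d_comp _ _ hsm, fac_d1 hpC])
      (by rw [Λ.s_comp _ _ hsm]; exact fac_s1 hpC)
      (by rw [Λ.comp_assoc _ _ _ hsm (fac_s1 hpC), fac_comp hpC])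
    rw [this]
  rw [seg, h1, h2, seg, ← hC]

lemma seg_vertex {v : Λ.Path} (hv : Λ.d v = 0) : Λ.seg v 0 0 = v := by
  rw [seg_zero_left (by intro i; exact Nat.zero_le _), fac_zero]
  simpa using Λ.r_vertex v hv

end seglemmas

/-! ### Powers of a cycle -/

variable (Λ) in
/-- `pow lam n` is `lam^n` (for `lam` a cycle). -/
noncomputable def pow (lam : Λ.Path) : ℕ → Λ.Path
  | 0 => Λ.r lam
  | n + 1 => Λ.comp lam (pow lam n)

section powlemmas

variable {tau : Λ.Path}

lemma pow_r (hc : Λ.r tau = Λ.s tau) (n : ℕ) : Λ.r (Λ.pow tau n) = Λ.r tau := by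
  induction n with
  | zero => exact Λ.r_vertex _ (Λ.d_r tau)
  | succ n ih => rw [pow, Λ.r_comp _ _ (by rw [ih, hc])]

lemma pow_comp_cond (hc : Λ.r tau = Λ.s tau) (n : ℕ) :
    Λ.s tau = Λ.r (Λ.pow tau n) := by
  rw [pow_r hc n, hc]

lemma pow_s (hc : Λ.r tau = Λ.s tau) (n : ℕ) : Λ.s (Λ.pow tau n) = Λ.r tau := by
  induction n with
  | zero => exact Λ.s_vertex _ (Λ.d_r tau)
  | succ n ih => rw [pow, Λ.s_comp _ _ (pow_comp_cond hc n), ih]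

lemma pow_d (hc : Λ.r tau = Λ.s tau) (n : ℕ) : Λ.d (Λ.pow tau n) = n • Λ.d tau := by
  induction n with
  | zero => rw [pow, Λ.d_r, zero_smul]
  | succ n ih => rw [pow, Λ.d_comp _ _ (pow_comp_cond hc n), ih, succ_nsmul']

lemma pow_add (hc : Λ.r tau = Λ.s tau) (a b : ℕ) :
    Λ.pow tau (a + b) = Λ.comp (Λ.pow tau a) (Λ.pow tau b) := by
  induction a with
  | zero =>
    rw [Nat.zero_add, pow, ← pow_r hc b, Λ.id_comp]
  | succ a ih =>
    have h1 : Λ.s (Λ.pow tau a) = Λ.r (Λ.pow tau b) := by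
      rw [pow_s hc a, pow_r hc b]
    rw [show a + 1 + b = (a + b) + 1 by omega, pow, ih,
      ← Λ.comp_assoc _ _ _ (pow_comp_cond hc a) h1]
    rfl

lemma le_pow_d (hc : Λ.r tau = Λ.s tau) {q : Fin k → ℕ} {M : ℕ}
    (hq : ∀ i, q i ≤ M * Λ.d tau i) : q ≤ Λ.d (Λ.pow tau M) := by
  intro i
  rw [pow_d hc M]
  simpa using hq i

/-- Independence of the ambient power. -/
lemma seg_pow_indep (hc : Λ.r tau = Λ.s tau) {p q : Fin k → ℕ} {a b : ℕ}
    (hqa : ∀ i, q i ≤ a * Λ.d tau i) (hqb : ∀ i, q i ≤ b * Λ.d tau i) :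
    Λ.seg (Λ.pow tau a) p q = Λ.seg (Λ.pow tau b) p q := by
  have key : ∀ a b : ℕ, a ≤ b → (∀ i, q i ≤ a * Λ.d tau i) →
      Λ.seg (Λ.pow tau a) p q = Λ.seg (Λ.pow tau b) p q := by
    intro a b hab hqa
    obtain ⟨c, rfl⟩ := Nat.exists_eq_add_of_le hab
    rw [pow_add hc a c]
    rw [seg_comp_left (by rw [pow_s hc a, pow_r hc c]) (le_pow_d hc hqa)]
  rcases le_total a b with h | h
  · exact key a b h hqa
  · exact (key b a h hqb).symm

end powlemmas

section powseg

variable {tau : Λ.Path}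

lemma fac_pow (hc : Λ.r tau = Λ.s tau) {M : ℕ} (hM : 1 ≤ M) :
    Λ.fac (Λ.pow tau M) (Λ.d tau) = (tau, Λ.pow tau (M - 1)) := by
  obtain ⟨c, rfl⟩ : ∃ c, M = c + 1 := ⟨M - 1, by omega⟩
  simp only [Nat.add_sub_cancel]
  exact fac_unique rfl (pow_comp_cond hc c) rfl

lemma seg_pow_cycle (hc : Λ.r tau = Λ.s tau) {n M : ℕ} (hn : n < M) :
    Λ.seg (Λ.pow tau M) (n • Λ.d tau) ((n + 1) • Λ.d tau) = tau := by
  have hM : M = n + (M - n) := by omega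
  rw [hM, pow_add hc n (M - n)]
  have h1 : Λ.s (Λ.pow tau n) = Λ.r (Λ.pow tau (M - n)) := by
    rw [pow_s hc, pow_r hc]
  have h2 : Λ.d tau ≤ Λ.d (Λ.pow tau (M - n)) := by
    refine le_pow_d hc fun i => ?_
    have : 1 ≤ M - n := by omega
    exact Nat.le_mul_of_pos_left _ (by omega)
  have h3 : (n • Λ.d tau) = Λ.d (Λ.pow tau n) + 0 := by
    rw [add_zero, pow_d hc]
  have h4 : ((n + 1) • Λ.d tau) = Λ.d (Λ.pow tau n) + Λ.d tau := by
    rw [pow_d hc, succ_nsmul]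
  rw [h3, h4, seg_shift h1 (by intro i; exact Nat.zero_le _) h2,
    seg_zero_left h2, fac_pow hc (by omega)]

lemma seg_pow_shift (hc : Λ.r tau = Λ.s tau) {p q : Fin k → ℕ} {c M : ℕ}
    (hpq : p ≤ q) (hq : ∀ i, q i ≤ c * Λ.d tau i) (hM : c + 1 ≤ M) :
    Λ.seg (Λ.pow tau M) (Λ.d tau + p) (Λ.d tau + q) = Λ.seg (Λ.pow tau M) p q := by
  have hq' : ∀ i, q i ≤ (M - 1) * Λ.d tau i := fun i =>
    le_trans (hq i) (Nat.mul_le_mul_right _ (by omega))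
  have hM' : M = (M - 1) + 1 := by omega
  have hstep : Λ.pow tau M = Λ.comp tau (Λ.pow tau (M - 1)) := by
    rw [hM']; rfl
  conv_lhs => rw [hstep]
  rw [seg_shift (pow_comp_cond hc (M - 1)) hpq (le_pow_d hc hq')]
  exact seg_pow_indep hc hq' fun i => le_trans (hq' i) (Nat.mul_le_mul_right _ (by omega))

end powseg

/-! ### Existence of an initial cycle -/

section stepA

lemma phi_step (hnoent : Λ.NoCycleHasEntrance) {lam : Λ.Path} (hcyc : Λ.IsCycle lam)
    {i : Fin k} (hi : Λ.d lam i = 0) {g : Λ.Path}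
    (hg : Λ.r g = Λ.r lam ∧ Λ.d g = Pi.single i 1) :
    ∃ p : Λ.Path × Λ.Path, (Λ.r p.1 = Λ.r lam ∧ Λ.d p.1 = Pi.single i 1) ∧
      Λ.r p.2 = Λ.s g ∧ Λ.s p.2 = Λ.s p.1 ∧ Λ.d p.2 = Λ.d lam := by
  obtain ⟨mu, hd, ⟨al, hsal, hcal⟩, ⟨be, hsbe, hcbe⟩⟩ := hnoent lam hcyc g hg.1
  have hd' : Λ.d mu = Λ.d lam + Pi.single i 1 := by
    rw [hd]
    funext j
    rcases eq_or_ne j i with rfl | hji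
    · simp [hg.2, hi]
    · simp [hg.2, Pi.single_apply, hji]
  have hdbe : Λ.d be = Pi.single i 1 := by
    have h1 : Λ.d mu = Λ.d lam + Λ.d be := by rw [← hcbe]; exact Λ.d_comp _ _ hsbe
    have := h1.symm.trans hd'
    exact add_left_cancel this
  have hdal : Λ.d al = Λ.d lam := by
    have h1 : Λ.d mu = Λ.d g + Λ.d al := by rw [← hcal]; exact Λ.d_comp _ _ hsal
    funext j
    have h2 := congrFun (h1.symm.trans hd') j
    have h3 := congrFun hg.2 j
    simp only [Pi.add_apply] at h2 h3
    omega
  have hsmu1 : Λ.s mu = Λ.s al := by rw [← hcal, Λ.s_comp _ _ hsal]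
  have hsmu2 : Λ.s mu = Λ.s be := by rw [← hcbe, Λ.s_comp _ _ hsbe]
  refine ⟨(be, al), ⟨?_, hdbe⟩, hsal.symm, hsmu1.symm.trans hsmu2, hdal⟩
  rw [← hsbe, ← hcyc.2]

lemma phi_seq (hnoent : Λ.NoCycleHasEntrance) {lam : Λ.Path} (hcyc : Λ.IsCycle lam)
    {i : Fin k} (hi : Λ.d lam i = 0) {e : Λ.Path}
    (he : Λ.r e = Λ.r lam ∧ Λ.d e = Pi.single i 1) :
    ∃ a al : ℕ → Λ.Path, a 0 = e ∧
      (∀ n, Λ.r (a n) = Λ.r lam ∧ Λ.d (a n) = Pi.single i 1) ∧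
      ∀ n, Λ.r (al n) = Λ.s (a n) ∧ Λ.s (al n) = Λ.s (a (n + 1)) ∧ Λ.d (al n) = Λ.d lam := by
  classical
  let T := {g : Λ.Path // Λ.r g = Λ.r lam ∧ Λ.d g = Pi.single i 1}
  let nxt : T → T × Λ.Path := fun g =>
    (⟨((phi_step hnoent hcyc hi g.2).choose).1,
      ((phi_step hnoent hcyc hi g.2).choose_spec).1⟩,
      ((phi_step hnoent hcyc hi g.2).choose).2)
  let a : ℕ → T := fun n => Nat.rec (⟨e, he⟩ : T) (fun _ g => (nxt g).1) n
  refine ⟨fun n => (a n).1, fun n => (nxt (a n)).2, rfl, fun n => (a n).2, fun n => ?_⟩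
  exact ((phi_step hnoent hcyc hi (a n).2).choose_spec).2

lemma exists_cycle_step (hRF : Λ.RowFinite) (hnoent : Λ.NoCycleHasEntrance)
    {lam : Λ.Path} (hcyc : Λ.IsCycle lam) {i : Fin k} (hi : Λ.d lam i = 0) {e : Λ.Path}
    (he : Λ.r e = Λ.r lam ∧ Λ.d e = Pi.single i 1) :
    ∃ g c : Λ.Path, Λ.r g = Λ.r lam ∧ Λ.d g = Pi.single i 1 ∧
      Λ.IsCycle c ∧ Λ.r c = Λ.s g := by
  classical
  obtain ⟨a, al, ha0, ha, hal⟩ := phi_seq hnoent hcyc hi he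
  have hS : {x | Λ.r x = Λ.r lam ∧ Λ.d x = Pi.single i 1}.Finite :=
    hRF (Λ.r lam) (Pi.single i 1) (Λ.d_r lam)
  haveI := hS.to_subtype
  obtain ⟨m, n, hmn, heq⟩ :=
    Finite.exists_ne_map_eq_of_infinite
      (fun n : ℕ => (⟨a n, ha n⟩ : {x | Λ.r x = Λ.r lam ∧ Λ.d x = Pi.single i 1}))
  have heq' : a m = a n := congrArg Subtype.val heq
  -- wlog m < n
  obtain ⟨p, q, hpq, hapq⟩ : ∃ p q, p < q ∧ a p = a q := by
    rcases lt_or_gt_of_ne hmn with h | h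
    · exact ⟨m, n, h, heq'⟩
    · exact ⟨n, m, h, heq'.symm⟩
  let D : ℕ → Λ.Path := fun j => Nat.rec (Λ.s (a p)) (fun j Dj => Λ.comp Dj (al (p + j))) j
  have hvert : Λ.d (Λ.s (a p)) = 0 := Λ.d_s _
  have hD : ∀ j, Λ.r (D j) = Λ.s (a p) ∧ Λ.s (D j) = Λ.s (a (p + j)) ∧
      Λ.d (D j) = j • Λ.d lam := by
    intro j
    induction j with
    | zero =>
      refine ⟨Λ.r_vertex _ hvert, Λ.s_vertex _ hvert, ?_⟩
      rw [zero_smul]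
      exact hvert
    | succ j ih =>
      have hcomp : Λ.s (D j) = Λ.r (al (p + j)) := by rw [ih.2.1, (hal (p + j)).1]
      refine ⟨?_, ?_, ?_⟩
      · show Λ.r (Λ.comp (D j) (al (p + j))) = _
        rw [Λ.r_comp _ _ hcomp, ih.1]
      · show Λ.s (Λ.comp (D j) (al (p + j))) = _
        rw [Λ.s_comp _ _ hcomp, (hal (p + j)).2.1, show p + j + 1 = p + (j + 1) by omega]
      · show Λ.d (Λ.comp (D j) (al (p + j))) = _
        rw [Λ.d_comp _ _ hcomp, ih.2.2, (hal (p + j)).2.2, succ_nsmul]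
  refine ⟨a p, D (q - p), (ha p).1, (ha p).2, ⟨?_, ?_⟩, (hD (q - p)).1⟩
  · -- degree nonzero
    obtain ⟨j0, hj0⟩ := Function.ne_iff.mp hcyc.1
    intro h0
    have := congrFun ((hD (q - p)).2.2.symm.trans h0) j0
    simp only [Pi.smul_apply, smul_eq_mul, Pi.zero_apply] at this hj0
    have : (q - p) * Λ.d lam j0 = 0 := this
    rcases Nat.mul_eq_zero.mp this with h | h
    · omega
    · exact hj0 h
  · rw [(hD (q - p)).1, (hD (q - p)).2.1, show p + (q - p) = q by omega, ← hapq]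

variable (Λ) in
/-- The set of vertices reachable from `v`. -/
def reach (v : Λ.Path) : Set Λ.Path := {u | ∃ p, Λ.r p = v ∧ Λ.s p = u}

lemma reach_finite (hfin : {v : Λ.Path | Λ.IsVertex v}.Finite) (v : Λ.Path) :
    (Λ.reach v).Finite :=
  hfin.subset fun u ⟨p, _, hs⟩ => by rw [Set.mem_setOf_eq, ← hs]; exact Λ.d_s p

variable (Λ) in
noncomputable def cmeasure (lam : Λ.Path) : ℕ :=
  (Λ.reach (Λ.r lam)).ncard * (k + 1) +
    (k - (Finset.univ.filter fun i => Λ.d lam i ≠ 0).card)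

lemma exists_initial (hRF : Λ.RowFinite) (hfin : {v : Λ.Path | Λ.IsVertex v}.Finite)
    (hnoent : Λ.NoCycleHasEntrance) (hcyc : ∃ lam, Λ.IsCycle lam) :
    ∃ τ, Λ.IsCycle τ ∧
      ∀ i, Λ.d τ i = 0 → ∀ e, ¬(Λ.r e = Λ.r τ ∧ Λ.d e = Pi.single i 1) := by
  classical
  obtain ⟨lam0, h0⟩ := hcyc
  suffices h : ∀ N lam, Λ.IsCycle lam → Λ.cmeasure lam < N → ∃ τ, Λ.IsCycle τ ∧
      ∀ i, Λ.d τ i = 0 → ∀ e, ¬(Λ.r e = Λ.r τ ∧ Λ.d e = Pi.single i 1) by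
    exact h (Λ.cmeasure lam0 + 1) lam0 h0 (by omega)
  intro N
  induction N with
  | zero => intro lam _ h; omega
  | succ N ih =>
    intro lam hc hm
    by_cases hinit : ∀ i, Λ.d lam i = 0 → ∀ e, ¬(Λ.r e = Λ.r lam ∧ Λ.d e = Pi.single i 1)
    · exact ⟨lam, hc, hinit⟩
    push_neg at hinit
    obtain ⟨i, hi, e, he⟩ := hinit
    obtain ⟨g, c, hg1, hg2, hccyc, hrc⟩ := exists_cycle_step hRF hnoent hc hi he
    by_cases hv : Λ.r lam ∈ Λ.reach (Λ.s g)
    · -- enlarge the cycle at `r lam`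
      obtain ⟨ρ, hρr, hρs⟩ := hv
      have hsg : Λ.s g = Λ.r ρ := hρr.symm
      have hslam : Λ.s lam = Λ.r (Λ.comp g ρ) := by
        rw [Λ.r_comp _ _ hsg, hg1, hc.2]
      set lam' := Λ.comp lam (Λ.comp g ρ) with hlam'
      have hr' : Λ.r lam' = Λ.r lam := Λ.r_comp _ _ hslam
      have hd' : Λ.d lam' = Λ.d lam + (Pi.single i 1 + Λ.d ρ) := by
        rw [hlam', Λ.d_comp _ _ hslam, Λ.d_comp _ _ hsg, hg2]
      have hcyc' : Λ.IsCycle lam' := by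
        constructor
        · intro h0
          have := congrFun (hd'.symm.trans h0) i
          simp [Pi.single_apply] at this
        · rw [hr', Λ.s_comp _ _ hslam, Λ.s_comp _ _ hsg, hρs, hc.2]
      have hmeas : Λ.cmeasure lam' < Λ.cmeasure lam := by
        have hss : (Finset.univ.filter fun j => Λ.d lam j ≠ 0) ⊂
            (Finset.univ.filter fun j => Λ.d lam' j ≠ 0) := by
          constructor
          · intro j hj
            simp only [Finset.mem_filter, Finset.mem_univ, true_and] at hj ⊢
            have := congrFun hd' j
            simp only [Pi.add_apply] at this
            omega
          · intro hsub
            have hmem : i ∈ Finset.filter (fun j => Λ.d lam' j ≠ 0) Finset.univ := by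
              simp only [Finset.mem_filter, Finset.mem_univ, true_and]
              have h5 : Λ.d lam' i = Λ.d lam i + (1 + Λ.d ρ i) := by
                simpa using congrFun hd' i
              omega
            have hii := hsub hmem
            simp only [Finset.mem_filter, Finset.mem_univ, true_and] at hii
            exact hii hi
        have hcard := Finset.card_lt_card hss
        have hk1 : (Finset.univ.filter fun j => Λ.d lam' j ≠ 0).card ≤ k := by
          refine le_trans (Finset.card_le_univ _) (by simp)
        rw [cmeasure, cmeasure, hr']
        omega
      exact ih lam' hcyc' (by omega)
    · -- recurse at the strictly smaller reachable set
      have hsub : Λ.reach (Λ.s g) ⊆ Λ.reach (Λ.r lam) := by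
        rintro u ⟨ρ, hρr, hρs⟩
        refine ⟨Λ.comp g ρ, ?_, ?_⟩
        · rw [Λ.r_comp _ _ hρr.symm, hg1]
        · rw [Λ.s_comp _ _ hρr.symm, hρs]
      have hvmem : Λ.r lam ∈ Λ.reach (Λ.r lam) :=
        ⟨Λ.r lam, Λ.r_vertex _ (Λ.d_r lam), Λ.s_vertex _ (Λ.d_r lam)⟩
      have hlt : (Λ.reach (Λ.s g)).ncard < (Λ.reach (Λ.r lam)).ncard := by
        refine Set.ncard_lt_ncard ⟨hsub, fun hsub' => hv (hsub' hvmem)⟩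
          (reach_finite hfin _)
      have hmeas : Λ.cmeasure c < Λ.cmeasure lam := by
        have h1 : (k - (Finset.univ.filter fun j => Λ.d c j ≠ 0).card) ≤ k := by omega
        rw [cmeasure, cmeasure, hrc]
        have h2 : (Λ.reach (Λ.s g)).ncard + 1 ≤ (Λ.reach (Λ.r lam)).ncard := hlt
        nlinarith
      exact ih c hccyc (by omega)

end stepA

/-! ### Paths from the range of an initial cycle -/

section tauSec

variable {tau : Λ.Path}

lemma pow_cycle (hcyc : Λ.IsCycle tau) {M : ℕ} (hM : 1 ≤ M) :
    Λ.IsCycle (Λ.pow tau M) := by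
  have hrs := hcyc.2
  constructor
  · obtain ⟨j0, hj0⟩ := Function.ne_iff.mp hcyc.1
    intro h0
    have := congrFun ((pow_d hrs M).symm.trans h0) j0
    simp only [Pi.smul_apply, smul_eq_mul, Pi.zero_apply] at this hj0
    rcases Nat.mul_eq_zero.mp this with h | h
    · omega
    · exact hj0 h
  · rw [pow_r hrs, pow_s hrs]

lemma supp_le {q : Fin k → ℕ} (hq : ∀ i, Λ.d tau i = 0 → q i = 0) (i : Fin k) :
    q i ≤ (∑ j, q j) * Λ.d tau i := by
  by_cases h : Λ.d tau i = 0
  · rw [hq i h]; exact Nat.zero_le _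
  · calc q i ≤ ∑ j, q j := Finset.single_le_sum (fun j _ => Nat.zero_le _) (Finset.mem_univ i)
      _ ≤ (∑ j, q j) * Λ.d tau i := Nat.le_mul_of_pos_right _ (by omega)

/-- No edge of a colour missing from `d tau` occurs along any path leaving `r tau`
whose degree is supported on the support of `d tau`. -/
lemma no_edge_along (hcyc : Λ.IsCycle tau)
    (hinit : ∀ i, Λ.d tau i = 0 → ∀ e, ¬(Λ.r e = Λ.r tau ∧ Λ.d e = Pi.single i 1))
    (hnoent : Λ.NoCycleHasEntrance) {ρ : Λ.Path} (hρ : Λ.r ρ = Λ.r tau)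
    (hsupp : ∀ i, Λ.d tau i = 0 → Λ.d ρ i = 0) {i : Fin k} (hi : Λ.d tau i = 0)
    {e : Λ.Path} (hre : Λ.r e = Λ.s ρ) (hde : Λ.d e = Pi.single i 1) : False := by
  set M := (∑ j, Λ.d ρ j) + 1 with hM
  have hrs := hcyc.2
  have hcycM := pow_cycle hcyc (M := M) (by omega)
  have hμ : Λ.s ρ = Λ.r e := hre.symm
  have hrmu : Λ.r (Λ.comp ρ e) = Λ.r (Λ.pow tau M) := by
    rw [Λ.r_comp _ _ hμ, hρ, pow_r hrs]
  obtain ⟨ν, hdν, _, ⟨β, hsβ, hcβ⟩⟩ := hnoent _ hcycM _ hrmu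
  have hdmu : Λ.d (Λ.comp ρ e) = Λ.d ρ + Pi.single i 1 := by
    rw [Λ.d_comp _ _ hμ, hde]
  have hsup : Λ.d (Λ.comp ρ e) ⊔ Λ.d (Λ.pow tau M) = Λ.d (Λ.pow tau M) + Pi.single i 1 := by
    rw [hdmu, pow_d hrs]
    funext j
    simp only [Pi.sup_apply, Pi.add_apply, Pi.smul_apply, Pi.single_apply, smul_eq_mul]
    rcases eq_or_ne j i with rfl | hji
    · simp [hsupp _ hi, hi]
    · simp only [if_neg hji, add_zero]
      have : Λ.d ρ j ≤ M * Λ.d tau j := by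
        by_cases h : Λ.d tau j = 0
        · rw [hsupp j h]; exact Nat.zero_le _
        · have h1 : 1 ≤ Λ.d tau j := Nat.one_le_iff_ne_zero.mpr h
          have h2 : Λ.d ρ j ≤ ∑ j', Λ.d ρ j' :=
            Finset.single_le_sum (fun j' _ => Nat.zero_le _) (Finset.mem_univ j)
          have h3 : M ≤ M * Λ.d tau j := Nat.le_mul_of_pos_right _ (by omega)
          omega
      omega
  have hdβ : Λ.d β = Pi.single i 1 := by
    have h1 : Λ.d ν = Λ.d (Λ.pow tau M) + Λ.d β := by rw [← hcβ]; exact Λ.d_comp _ _ hsβ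
    have h2 := h1.symm.trans (hdν.trans hsup)
    exact add_left_cancel h2
  refine hinit i hi β ⟨?_, hdβ⟩
  rw [← hsβ, pow_s hrs]

/-- Any path leaving `r tau` with degree dominated by `M • d tau` is an initial
segment of `tau ^ M`. -/
lemma prefix_eq_fac (hcyc : Λ.IsCycle tau) (hnoent : Λ.NoCycleHasEntrance)
    {mu : Λ.Path} (hmu : Λ.r mu = Λ.r tau) {M : ℕ} (hM : 1 ≤ M)
    (hb : Λ.d mu ≤ M • Λ.d tau) : mu = (Λ.fac (Λ.pow tau M) (Λ.d mu)).1 := by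
  have hrs := hcyc.2
  have hcycM := pow_cycle hcyc hM
  have hrmu : Λ.r mu = Λ.r (Λ.pow tau M) := by rw [hmu, pow_r hrs]
  obtain ⟨ν, hdν, ⟨al, hsal, hcal⟩, ⟨β, hsβ, hcβ⟩⟩ := hnoent _ hcycM _ hrmu
  have hdν' : Λ.d ν = Λ.d (Λ.pow tau M) := by
    rw [hdν, pow_d hrs, sup_eq_right.mpr hb]
  have hdβ : Λ.d β = 0 := by
    have h1 : Λ.d ν = Λ.d (Λ.pow tau M) + Λ.d β := by rw [← hcβ]; exact Λ.d_comp _ _ hsβ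
    have h2 := h1.symm.trans hdν'
    funext j
    have := congrFun h2 j
    simp only [Pi.add_apply, Pi.zero_apply] at this ⊢
    omega
  have hβ : β = Λ.s (Λ.pow tau M) := (Λ.r_vertex β hdβ).symm.trans hsβ.symm
  have hν : ν = Λ.pow tau M := by rw [← hcβ, hβ, Λ.comp_id]
  have := fac_unique (lam := Λ.pow tau M) (mu := mu) (nu := al) rfl hsal (hν ▸ hcal)
  exact (congrArg Prod.fst this).symm

/-- If `i` lies in the support of `d tau` then every vertex reached from `r tau` by a
short enough supported path emits an edge of degree `eᵢ`. -/
lemma edge_on_supp (hcyc : Λ.IsCycle tau) (hnoent : Λ.NoCycleHasEntrance)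
    {mu : Λ.Path} (hmu : Λ.r mu = Λ.r tau) {M : ℕ} (hM : 1 ≤ M)
    (hb : Λ.d mu ≤ M • Λ.d tau) {i : Fin k} (hlt : Λ.d mu i < M * Λ.d tau i) :
    ∃ g, Λ.r g = Λ.s mu ∧ Λ.d g = Pi.single i 1 := by
  have hrs := hcyc.2
  have hkey := prefix_eq_fac hcyc hnoent hmu hM hb
  have hble : Λ.d mu ≤ Λ.d (Λ.pow tau M) := by rw [pow_d hrs]; exact hb
  set al := (Λ.fac (Λ.pow tau M) (Λ.d mu)).2 with hal
  have hdal : Λ.d al = Λ.d (Λ.pow tau M) - Λ.d mu := fac_d2 hble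
  have hsing : Pi.single i 1 ≤ Λ.d al := by
    intro j
    rw [hdal, pow_d hrs]
    rcases eq_or_ne j i with rfl | hji
    · simp [Pi.single_apply]
      omega
    · simp [Pi.single_apply, hji]
  refine ⟨(Λ.fac al (Pi.single i 1)).1, ?_, fac_d1 hsing⟩
  rw [r_fac1 hsing, hal, ← fac_s1 hble, ← hkey]

/-- Master determination lemma: path functors based at `r tau` are segments of powers. -/
lemma xdet (hcyc : Λ.IsCycle tau) (hnoent : Λ.NoCycleHasEntrance)
    {m : Fin k → ℕ∞} {x : (Fin k → ℕ) → (Fin k → ℕ) → Λ.Path}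
    (h : Λ.IsPathFun m x) (h00 : x 0 0 = Λ.r tau) {a b : Fin k → ℕ} (hab : a ≤ b)
    (hbm : ∀ i, (b i : ℕ∞) ≤ m i) {M : ℕ} (hM : 1 ≤ M) (hbM : b ≤ M • Λ.d tau) :
    x a b = Λ.seg (Λ.pow tau M) a b := by
  have hrs := hcyc.2
  obtain ⟨hd, hrsx, hcomp⟩ := h
  have ham : ∀ i, ((a i : ℕ∞)) ≤ m i := fun i => le_trans (by exact_mod_cast hab i) (hbm i)
  have h0b : (0 : Fin k → ℕ) ≤ b := fun i => Nat.zero_le _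
  have h0a : (0 : Fin k → ℕ) ≤ a := fun i => Nat.zero_le _
  have hd0b : Λ.d (x 0 b) = b := by
    rw [hd 0 b h0b hbm]; funext i; simp
  have hr0b : Λ.r (x 0 b) = Λ.r tau := by rw [(hrsx 0 b h0b hbm).1, h00]
  have hble : b ≤ Λ.d (Λ.pow tau M) := by rw [pow_d hrs]; exact hbM
  have hkey := prefix_eq_fac hcyc hnoent hr0b hM (by rw [hd0b]; exact hbM)
  rw [hd0b] at hkey
  -- two factorisations of `x 0 b`
  have hd0a : Λ.d (x 0 a) = a := by
    rw [hd 0 a h0a ham]; funext i; simp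
  have hsplit : Λ.comp (x 0 a) (x a b) = x 0 b := hcomp 0 a b h0a hab hbm
  have hsr : Λ.s (x 0 a) = Λ.r (x a b) := by
    rw [(hrsx 0 a h0a ham).2, (hrsx a b hab hbm).1]
  have hfac1 := fac_unique (lam := x 0 b) hd0a hsr hsplit
  have hsegsplit : Λ.comp (Λ.seg (Λ.pow tau M) 0 a) (Λ.seg (Λ.pow tau M) a b) = x 0 b := by
    rw [seg_comp h0a hab hble, seg_zero_left hble, ← hkey]
  have hsegd : Λ.d (Λ.seg (Λ.pow tau M) 0 a) = a := by
    rw [seg_d h0a (le_trans hab hble)]; funext i; simp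
  have hsegsr : Λ.s (Λ.seg (Λ.pow tau M) 0 a) = Λ.r (Λ.seg (Λ.pow tau M) a b) := by
    rw [s_seg h0a (le_trans hab hble), r_seg hab hble]
  have hfac2 := fac_unique (lam := x 0 b) hsegd hsegsr hsegsplit
  have := hfac1.symm.trans hfac2
  exact congrArg Prod.snd this

end tauSec

/-! ### The infinite iterate of an initial cycle -/

section xcon

variable {tau : Λ.Path}

variable (Λ) in
/-- Truncation of a degree vector to the support of `d tau`. -/
def maskf (tau : Λ.Path) (q : Fin k → ℕ) : Fin k → ℕ :=
  fun i => if Λ.d tau i = 0 then 0 else q i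

variable (Λ) in
/-- The path function of `tau ^ ∞`. -/
noncomputable def xfun (tau : Λ.Path) (p q : Fin k → ℕ) : Λ.Path :=
  Λ.seg (Λ.pow tau (∑ j, Λ.maskf tau q j)) (Λ.maskf tau p ⊓ Λ.maskf tau q) (Λ.maskf tau q)

lemma maskf_eq {q : Fin k → ℕ} (hq : ∀ i, Λ.d tau i = 0 → q i = 0) :
    Λ.maskf tau q = q := by
  funext i
  by_cases h : Λ.d tau i = 0
  · rw [maskf, if_pos h, hq i h]
  · rw [maskf, if_neg h]

lemma xfun_eq (hrs : Λ.r tau = Λ.s tau) {p q : Fin k → ℕ} (hpq : p ≤ q)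
    (hq : ∀ i, Λ.d tau i = 0 → q i = 0) {M : ℕ} (hM : ∀ i, q i ≤ M * Λ.d tau i) :
    Λ.xfun tau p q = Λ.seg (Λ.pow tau M) p q := by
  have hp : ∀ i, Λ.d tau i = 0 → p i = 0 := fun i h =>
    Nat.le_zero.mp (le_trans (hpq i) (le_of_eq (hq i h)))
  rw [xfun, maskf_eq hq, maskf_eq hp, inf_eq_left.mpr hpq]
  exact seg_pow_indep hrs (supp_le hq) hM

lemma xfun_is (hcyc : Λ.IsCycle tau)
    (hinit : ∀ i, Λ.d tau i = 0 → ∀ e, ¬(Λ.r e = Λ.r tau ∧ Λ.d e = Pi.single i 1))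
    (hnoent : Λ.NoCycleHasEntrance) :
    Λ.IsLeInftyPath (Λ.degInf tau) (Λ.xfun tau) ∧ Λ.xfun tau 0 0 = Λ.r tau := by
  have hrs := hcyc.2
  have hconstr : ∀ q : Fin k → ℕ, (∀ i, (q i : ℕ∞) ≤ Λ.degInf tau i) →
      ∀ i, Λ.d tau i = 0 → q i = 0 := by
    intro q h i hi
    have h1 := h i
    rw [degInf] at h1
    simp only [hi, if_pos] at h1
    have h2 : (q i : ℕ∞) = 0 := le_antisymm h1 zero_le
    exact_mod_cast h2
  constructor; constructor
  · refine ⟨?_, ?_, ?_⟩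
    · -- degrees
      intro p q hpq hqm
      have hqs := hconstr q hqm
      have hM := supp_le hqs
      rw [xfun_eq hrs hpq hqs hM]
      exact seg_d hpq (le_pow_d hrs hM)
    · -- ranges and sources
      intro p q hpq hqm
      have hqs := hconstr q hqm
      have hM := supp_le hqs
      have hps : ∀ i, Λ.d tau i = 0 → p i = 0 := fun i h =>
        Nat.le_zero.mp (le_trans (hpq i) (le_of_eq (hqs i h)))
      have hMp : ∀ i, p i ≤ (∑ j, q j) * Λ.d tau i := fun i => le_trans (hpq i) (hM i)
      rw [xfun_eq hrs hpq hqs hM]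
      constructor
      · rw [r_seg hpq (le_pow_d hrs hM)]
        exact (xfun_eq hrs (le_refl p) hps hMp).symm
      · rw [s_seg hpq (le_pow_d hrs hM)]
        exact (xfun_eq hrs (le_refl q) hqs hM).symm
    · -- composition
      intro p q u hpq hqu hum
      have hus := hconstr u hum
      have hMu := supp_le hus
      have hqs : ∀ i, Λ.d tau i = 0 → q i = 0 := fun i h =>
        Nat.le_zero.mp (le_trans (hqu i) (le_of_eq (hus i h)))
      have hMq : ∀ i, q i ≤ (∑ j, u j) * Λ.d tau i := fun i => le_trans (hqu i) (hMu i)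
      rw [xfun_eq hrs hpq hqs hMq, xfun_eq hrs hqu hus hMu,
        xfun_eq hrs (le_trans hpq hqu) hus hMu]
      exact seg_comp hpq hqu (le_pow_d hrs hMu)
  · -- maximality
    intro n hnm i hni e he
    by_cases hdi : Λ.d tau i = 0
    · have hns := hconstr n hnm
      have hM := supp_le hns
      have hn0 : (0 : Fin k → ℕ) ≤ n := fun j => Nat.zero_le _
      have hbound := le_pow_d hrs hM
      set ρ := Λ.seg (Λ.pow tau (∑ j, n j)) 0 n with hρ
      have hρr : Λ.r ρ = Λ.r tau := by rw [hρ, r_seg_zero hbound, pow_r hrs]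
      have hdρ : Λ.d ρ = n := by
        rw [hρ, seg_d hn0 hbound]; funext j; simp
      have hsupp' : ∀ j, Λ.d tau j = 0 → Λ.d ρ j = 0 := by
        rw [hdρ]; exact hns
      have hsρ : Λ.s ρ = Λ.xfun tau n n := by
        rw [hρ, s_seg hn0 hbound]
        exact (xfun_eq hrs (le_refl n) hns hM).symm
      exact no_edge_along hcyc hinit hnoent hρr hsupp' hdi
        (he.1.trans hsρ.symm) he.2
    · rw [degInf] at hni
      simp only [hdi, if_neg, if_false] at hni
      exact (ENat.coe_ne_top _) hni
  · -- value at the base vertex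
    have h0 : ∀ i, Λ.d tau i = 0 → (0 : Fin k → ℕ) i = 0 := fun i _ => rfl
    rw [xfun_eq hrs (le_refl 0) h0 (M := 0) (fun i => by simp)]
    show Λ.seg (Λ.r tau) 0 0 = Λ.r tau
    exact seg_vertex (Λ.d_r tau)

end xcon

end KGraph
/-- key step of Corollary 5.7. If `Λ` is row-finite, locally convex, has
finitely many vertices, contains a cycle, and no cycle of `Λ` has an entrance, then there is
a cycle `τ` with `r(τ)Λ^{eᵢ} = ∅` whenever `d(τ)ᵢ = 0` and with `r(τ)Λ^{≤∞} = {τ^∞}`; in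
particular `σ^{d τ} x = x` for every `x ∈ r(τ)Λ^{≤∞}`. -/
theorem stmt14 {k : ℕ} (Λ : KGraph k) (hRF : Λ.RowFinite) (hLC : Λ.LocallyConvex)
    (hfin : {v : Λ.Path | Λ.IsVertex v}.Finite)
    (hcyc : ∃ lam, Λ.IsCycle lam) (hnoent : Λ.NoCycleHasEntrance) :
    ∃ τ : Λ.Path, Λ.IsCycle τ ∧
      (∀ i, Λ.d τ i = 0 → ∀ e, ¬(Λ.r e = Λ.r τ ∧ Λ.d e = Pi.single i 1)) ∧
      -- `τ^∞ ∈ r(τ)Λ^{≤∞}`, so `r(τ)Λ^{≤∞}` is nonempty …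
      (∃ x : (Fin k → ℕ) → (Fin k → ℕ) → Λ.Path,
        Λ.IsLeInftyPath (Λ.degInf τ) x ∧ x 0 0 = Λ.r τ ∧
        ∀ n : ℕ, x (n • Λ.d τ) ((n + 1) • Λ.d τ) = τ) ∧
      -- … and every element of `r(τ)Λ^{≤∞}` equals `τ^∞`; in particular `σ^{d τ} x = x`.
      ∀ (m : Fin k → ℕ∞) (x : (Fin k → ℕ) → (Fin k → ℕ) → Λ.Path),
        Λ.IsLeInftyPath m x → x 0 0 = Λ.r τ →
        m = Λ.degInf τ ∧
        (∀ n : ℕ, x (n • Λ.d τ) ((n + 1) • Λ.d τ) = τ) ∧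
        ∀ p q : Fin k → ℕ, p ≤ q → (∀ i, ((Λ.d τ i + q i : ℕ) : ℕ∞) ≤ m i) →
          x (Λ.d τ + p) (Λ.d τ + q) = x p q := by
  classical
  obtain ⟨τ, hτcyc, hinit⟩ := KGraph.exists_initial hRF hfin hnoent hcyc
  have hrs : Λ.r τ = Λ.s τ := hτcyc.2
  have huniv : ∀ (m : Fin k → ℕ∞) (x : (Fin k → ℕ) → (Fin k → ℕ) → Λ.Path),
      Λ.IsLeInftyPath m x → x 0 0 = Λ.r τ →
      m = Λ.degInf τ ∧
      (∀ n : ℕ, x (n • Λ.d τ) ((n + 1) • Λ.d τ) = τ) ∧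
      ∀ p q : Fin k → ℕ, p ≤ q → (∀ i, ((Λ.d τ i + q i : ℕ) : ℕ∞) ≤ m i) →
        x (Λ.d τ + p) (Λ.d τ + q) = x p q := by
    intro m x hx h00
    obtain ⟨hpf, hmax⟩ := hx
    obtain ⟨hdx, hrsx, hcompx⟩ := hpf
    -- (1) the degree of `x` is `degInf τ`
    have hm : m = Λ.degInf τ := by
      funext i
      by_cases hdi : Λ.d τ i = 0
      · rw [KGraph.degInf]
        simp only [hdi, if_pos]
        by_contra hne
        have h1 : (1 : ℕ∞) ≤ m i := ENat.one_le_iff_ne_zero.mpr hne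
        set b : Fin k → ℕ := Pi.single i 1 with hb
        have hbm : ∀ j, (b j : ℕ∞) ≤ m j := by
          intro j
          rcases eq_or_ne j i with rfl | hji
          · simpa [hb, Pi.single_apply] using h1
          · simp [hb, Pi.single_apply, hji]
        have hde : Λ.d (x 0 b) = b := by
          rw [hdx 0 b (fun j => Nat.zero_le _) hbm]; funext j; simp
        have hre : Λ.r (x 0 b) = Λ.r τ := by
          rw [(hrsx 0 b (fun j => Nat.zero_le _) hbm).1, h00]
        exact absurd ⟨hre, hde⟩ (hinit i hdi (x 0 b))
      · rw [KGraph.degInf]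
        simp only [hdi, if_neg, if_false]
        by_contra hne
        obtain ⟨c, hc⟩ := WithTop.ne_top_iff_exists.mp hne
        set p : Fin k → ℕ := Pi.single i c with hp
        have hpi : p i = c := by simp [hp, Pi.single_apply]
        have hpm : ∀ j, (p j : ℕ∞) ≤ m j := by
          intro j
          rcases eq_or_ne j i with rfl | hji
          · rw [hpi]
            exact le_of_eq hc
          · simp [hp, Pi.single_apply, hji]
        have hdμ : Λ.d (x 0 p) = p := by
          rw [hdx 0 p (fun j => Nat.zero_le _) hpm]; funext j; simp
        have hrμ : Λ.r (x 0 p) = Λ.r τ := by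
          rw [(hrsx 0 p (fun j => Nat.zero_le _) hpm).1, h00]
        have hdτi : 1 ≤ Λ.d τ i := Nat.one_le_iff_ne_zero.mpr hdi
        have hble : Λ.d (x 0 p) ≤ (c + 1) • Λ.d τ := by
          rw [hdμ]
          intro j
          rcases eq_or_ne j i with rfl | hji
          · simp only [Pi.smul_apply, smul_eq_mul, hpi]
            nlinarith
          · simp [hp, Pi.single_apply, hji]
        have hlt : Λ.d (x 0 p) i < (c + 1) * Λ.d τ i := by
          rw [hdμ, hpi]
          nlinarith
        obtain ⟨g, hg1, hg2⟩ := KGraph.edge_on_supp hτcyc hnoent hrμ (by omega) hble hlt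
        refine hmax p hpm i ?_ g ⟨?_, hg2⟩
        · rw [hpi]
          exact hc
        · rw [hg1, (hrsx 0 p (fun j => Nat.zero_le _) hpm).2]
    refine ⟨hm, ?_, ?_⟩
    · -- (2) `x` traverses `τ` repeatedly
      intro n
      have hbm : ∀ i, (((n + 1) • Λ.d τ) i : ℕ∞) ≤ m i := by
        intro i
        rw [hm, KGraph.degInf]
        by_cases hdi : Λ.d τ i = 0
        · simp [hdi]
        · simp [hdi]
      have hab : n • Λ.d τ ≤ (n + 1) • Λ.d τ := by
        intro i
        simp only [Pi.smul_apply, smul_eq_mul]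
        exact Nat.mul_le_mul_right _ (by omega)
      have hbM : (n + 1) • Λ.d τ ≤ (n + 2) • Λ.d τ := by
        intro i
        simp only [Pi.smul_apply, smul_eq_mul]
        exact Nat.mul_le_mul_right _ (by omega)
      rw [KGraph.xdet hτcyc hnoent ⟨hdx, hrsx, hcompx⟩ h00 hab hbm (by omega) hbM]
      exact KGraph.seg_pow_cycle hrs (by omega)
    · -- (3) shift invariance
      intro p q hpq hcq
      have hqsupp : ∀ i, Λ.d τ i = 0 → q i = 0 := by
        intro i hdi
        have h1 := hcq i
        rw [hm] at h1
        have h1' : ((Λ.d τ i + q i : ℕ) : ℕ∞) ≤ 0 := by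
          rwa [show Λ.degInf τ i = 0 from by rw [KGraph.degInf]; simp [hdi]] at h1
        have h2 : Λ.d τ i + q i = 0 := by
          exact_mod_cast le_antisymm h1' zero_le
        omega
      have hdqsupp : ∀ i, Λ.d τ i = 0 → (Λ.d τ + q) i = 0 := by
        intro i hdi
        simp only [Pi.add_apply, hdi, hqsupp i hdi]
      set c := ∑ j, (Λ.d τ + q) j with hcdef
      have hbM : Λ.d τ + q ≤ (c + 1) • Λ.d τ := by
        intro i
        have h5 := KGraph.supp_le hdqsupp i
        rw [← hcdef] at h5
        simp only [Pi.smul_apply, smul_eq_mul]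
        exact le_trans h5 (Nat.mul_le_mul_right _ (by omega))
      have hbm : ∀ i, ((Λ.d τ + q) i : ℕ∞) ≤ m i := by
        intro i
        simpa using hcq i
      have hab : Λ.d τ + p ≤ Λ.d τ + q := fun i => by
        simpa using add_le_add_left (hpq i) (Λ.d τ i)
      have h1 := KGraph.xdet hτcyc hnoent ⟨hdx, hrsx, hcompx⟩ h00 hab hbm
        (M := c + 1) (by omega) hbM
      have hqm : ∀ i, (q i : ℕ∞) ≤ m i := by
        intro i
        refine le_trans ?_ (hcq i)
        exact_mod_cast Nat.le_add_left _ _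
      have hqM : q ≤ (c + 1) • Λ.d τ := fun i =>
        le_trans (by simpa using Nat.le_add_left (q i) (Λ.d τ i)) (hbM i)
      have h2 := KGraph.xdet hτcyc hnoent ⟨hdx, hrsx, hcompx⟩ h00 hpq hqm
        (M := c + 1) (by omega) hqM
      have hq_le : ∀ i, q i ≤ c * Λ.d τ i := by
        intro i
        have h3 := KGraph.supp_le hqsupp i
        have h4 : (∑ j, q j) ≤ c := by
          rw [hcdef]
          exact Finset.sum_le_sum fun j _ => by
            simpa using Nat.le_add_left (q j) (Λ.d τ j)
        exact le_trans h3 (Nat.mul_le_mul_right _ h4)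
      have h3 := KGraph.seg_pow_shift hrs hpq hq_le (le_refl (c + 1))
      rw [h1, h3, ← h2]
  obtain ⟨hle, h00⟩ := KGraph.xfun_is hτcyc hinit hnoent
  exact ⟨τ, hτcyc, hinit, ⟨Λ.xfun τ, hle, h00, (huniv _ _ hle h00).2.1⟩, huniv⟩
end

section
/- Let Λ be a row-finite locally convex k-graph such that Λ⁰ is finite and no cycle in Λ has an entrance. Let μ be an initial cycle of Λ. Then G_μ := {m − n : m, n ∈ ℕ^k, m ≤ d(μ^∞), n ≤ d(μ^∞), μ^∞(m) = μ^∞(n)} is a subgroup of ℤ^k. -/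
open scoped ComplexOrder ENat

/-- Lemma 5.8. For an initial cycle `μ` (with `μ^∞` encoded by any path
function `x` satisfying its characterising properties), the set
`G_μ = {m − n : m, n ≤ d(μ^∞), μ^∞(m) = μ^∞(n)}` is a subgroup of `ℤᵏ`. -/
theorem stmt15 {k : ℕ} (Λ : KGraph k) (hRF : Λ.RowFinite) (hLC : Λ.LocallyConvex)
    (hfin : {v : Λ.Path | Λ.IsVertex v}.Finite) (hnoent : Λ.NoCycleHasEntrance)
    (mu : Λ.Path) (hmu : Λ.IsInitialCycle mu)
    (x : (Fin k → ℕ) → (Fin k → ℕ) → Λ.Path) (hx : Λ.IsInfIterate mu x) :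
    ∃ G : AddSubgroup (Fin k → ℤ),
      (G : Set (Fin k → ℤ)) =
        {g | ∃ p q : Fin k → ℕ,
          (∀ i, (p i : ℕ∞) ≤ Λ.degInf mu i) ∧ (∀ i, (q i : ℕ∞) ≤ Λ.degInf mu i) ∧
          x p p = x q q ∧ g = fun i => (p i : ℤ) - (q i : ℤ)} := by
  classical
  obtain ⟨⟨hd, hrs, hcomp⟩, hx00, hper⟩ := hx
  have okinf : ∀ p : Fin k → ℕ, (∀ i, Λ.d mu i = 0 → p i = 0) →
      ∀ i, (p i : ℕ∞) ≤ Λ.degInf mu i := by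
    intro p hp i
    by_cases h : Λ.d mu i = 0
    · simp [KGraph.degInf, h, hp i h]
    · simp [KGraph.degInf, h]
  have okOf : ∀ p : Fin k → ℕ, (∀ i, (p i : ℕ∞) ≤ Λ.degInf mu i) →
      ∀ i, Λ.d mu i = 0 → p i = 0 := by
    intro p hp i h
    have h2 := hp i
    rw [KGraph.degInf] at h2
    simp only [h, if_true] at h2
    have h3 : (p i : ℕ∞) = 0 := le_antisymm h2 zero_le
    exact_mod_cast h3
  have okNsmul : ∀ N : ℕ, ∀ i, Λ.d mu i = 0 → (N • Λ.d mu) i = 0 := by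
    intro N i h; simp [Pi.smul_apply, h]
  have hsmul_le : ∀ a b : ℕ, a ≤ b → (a • Λ.d mu) ≤ (b • Λ.d mu) := by
    intro a b hab
    refine Pi.le_def.mpr fun i => ?_
    simp only [Pi.smul_apply, smul_eq_mul]
    exact Nat.mul_le_mul_right _ hab
  have hvN : ∀ N : ℕ, x (N • Λ.d mu) (N • Λ.d mu) = Λ.r mu := by
    intro N
    have h := hrs (N • Λ.d mu) ((N + 1) • Λ.d mu) (hsmul_le N (N + 1) (Nat.le_succ N))
      (okinf _ (okNsmul (N + 1)))
    rw [hper N] at h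
    exact h.1.symm
  have hprod : ∀ M N : ℕ, x (N • Λ.d mu) ((N + M) • Λ.d mu) = x 0 (M • Λ.d mu) := by
    intro M
    induction M with
    | zero =>
      intro N
      rw [Nat.add_zero, hvN N, zero_smul, hx00]
    | succ M ih =>
      intro N
      have e1 := hcomp (N • Λ.d mu) ((N + M) • Λ.d mu) ((N + M + 1) • Λ.d mu)
        (hsmul_le _ _ (Nat.le_add_right N M)) (hsmul_le _ _ (Nat.le_succ _))
        (okinf _ (okNsmul _))
      have e2 := hcomp 0 (M • Λ.d mu) ((M + 1) • Λ.d mu)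
        (Pi.le_def.mpr fun i => Nat.zero_le _) (hsmul_le _ _ (Nat.le_succ _))
        (okinf _ (okNsmul _))
      rw [show N + (M + 1) = N + M + 1 from by omega, ← e1, ih N, hper (N + M), ← e2,
        hper M]
  have hbound : ∀ p : Fin k → ℕ, (∀ i, Λ.d mu i = 0 → p i = 0) →
      ∃ M : ℕ, p ≤ M • Λ.d mu := by
    intro p hp
    refine ⟨Finset.univ.sup p, Pi.le_def.mpr fun i => ?_⟩
    simp only [Pi.smul_apply, smul_eq_mul]
    by_cases h : Λ.d mu i = 0
    · simp [hp i h]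
    · have h1 : 1 ≤ Λ.d mu i := Nat.one_le_iff_ne_zero.mpr h
      have h2 : p i ≤ Finset.univ.sup p := Finset.le_sup (Finset.mem_univ i)
      calc p i ≤ Finset.univ.sup p * 1 := by omega
        _ ≤ Finset.univ.sup p * Λ.d mu i := Nat.mul_le_mul_left _ h1
  have hperiod : ∀ p : Fin k → ℕ, (∀ i, Λ.d mu i = 0 → p i = 0) → ∀ N : ℕ,
      x (p + N • Λ.d mu) (p + N • Λ.d mu) = x p p := by
    intro p hp N
    obtain ⟨M, hM⟩ := hbound p hp
    have okp := okinf p hp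
    have okM := okinf _ (okNsmul M)
    have hok1 : ∀ i, ((N • Λ.d mu + p) i : ℕ∞) ≤ Λ.degInf mu i :=
      okinf _ (fun i h => by simp [Pi.add_apply, h, hp i h])
    have hokU : ∀ i, ((N • Λ.d mu + M • Λ.d mu) i : ℕ∞) ≤ Λ.degInf mu i :=
      okinf _ (fun i h => by simp [Pi.add_apply, h])
    have hle1 : N • Λ.d mu ≤ N • Λ.d mu + p := Pi.le_def.mpr fun i => Nat.le_add_right _ _
    have hle2 : N • Λ.d mu + p ≤ N • Λ.d mu + M • Λ.d mu := add_le_add_right hM _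
    have hdY : Λ.d (x 0 (M • Λ.d mu)) = p + (M • Λ.d mu - p) := by
      rw [hd 0 (M • Λ.d mu) (Pi.le_def.mpr fun i => Nat.zero_le _) okM]
      funext i
      have := Pi.le_def.mp hM i
      simp only [Pi.sub_apply, Pi.zero_apply, Pi.add_apply] at *
      omega
    obtain ⟨P, hP, hPuniq⟩ := Λ.factor _ p (M • Λ.d mu - p) hdY
    have h1 : (x 0 p, x p (M • Λ.d mu)) = P := by
      apply hPuniq
      refine ⟨?_, ?_, ?_, ?_⟩
      · rw [hd 0 p (Pi.le_def.mpr fun i => Nat.zero_le _) okp]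
        funext i; simp
      · rw [hd p _ hM okM]
      · rw [(hrs 0 p (Pi.le_def.mpr fun i => Nat.zero_le _) okp).2, (hrs p _ hM okM).1]
      · exact hcomp 0 p _ (Pi.le_def.mpr fun i => Nat.zero_le _) hM okM
    have hXY : x (N • Λ.d mu) (N • Λ.d mu + M • Λ.d mu) = x 0 (M • Λ.d mu) := by
      rw [← add_smul]; exact hprod M N
    have h2 : (x (N • Λ.d mu) (N • Λ.d mu + p),
        x (N • Λ.d mu + p) (N • Λ.d mu + M • Λ.d mu)) = P := by
      apply hPuniq
      refine ⟨?_, ?_, ?_, ?_⟩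
      · rw [hd _ _ hle1 hok1]
        funext i; simp only [Pi.sub_apply, Pi.add_apply]; omega
      · rw [hd _ _ hle2 hokU]
        funext i; simp only [Pi.sub_apply, Pi.add_apply, Pi.smul_apply]; omega
      · rw [(hrs _ _ hle1 hok1).2, (hrs _ _ hle2 hokU).1]
      · rw [hcomp _ _ _ hle1 hle2 hokU, hXY]
    have h3 : x 0 p = x (N • Λ.d mu) (N • Λ.d mu + p) :=
      congrArg Prod.fst (h1.trans h2.symm)
    have hs1 := (hrs 0 p (Pi.le_def.mpr fun i => Nat.zero_le _) okp).2
    rw [h3, (hrs _ _ hle1 hok1).2] at hs1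
    rw [add_comm p (N • Λ.d mu)]
    exact hs1
  have huniq : ∀ p t : Fin k → ℕ, (∀ i, Λ.d mu i = 0 → p i = 0) →
      (∀ i, Λ.d mu i = 0 → t i = 0) →
      ∀ lam, Λ.r lam = x p p → Λ.d lam = t → lam = x p (p + t) := by
    intro p t hp ht lam hrlam hdlam
    by_cases hdm : Λ.d mu = 0
    · have ht0 : t = 0 := funext fun i => ht i (by rw [hdm]; rfl)
      have hv : Λ.r lam = lam := Λ.r_vertex lam (by rw [hdlam, ht0])
      rw [ht0, add_zero]
      exact hv.symm.trans hrlam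
    · obtain ⟨M, hMb⟩ := hbound t ht
      have htN : t ≤ (M + 1) • Λ.d mu := le_trans hMb (hsmul_le M (M + 1) (Nat.le_succ M))
      have okp := okinf p hp
      have hokc : ∀ i, ((p + (M + 1) • Λ.d mu) i : ℕ∞) ≤ Λ.degInf mu i :=
        okinf _ (fun i h => by simp [Pi.add_apply, h, hp i h])
      have hlepc : p ≤ p + (M + 1) • Λ.d mu := Pi.le_def.mpr fun i => Nat.le_add_right _ _
      have hdc : Λ.d (x p (p + (M + 1) • Λ.d mu)) = (M + 1) • Λ.d mu := by
        rw [hd _ _ hlepc hokc]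
        funext i; simp only [Pi.sub_apply, Pi.add_apply]; omega
      have hcyc : Λ.IsCycle (x p (p + (M + 1) • Λ.d mu)) := by
        constructor
        · rw [hdc]
          intro h
          obtain ⟨i0, hi0⟩ : ∃ i, Λ.d mu i ≠ 0 := by
            by_contra hc; push_neg at hc; exact hdm (funext hc)
          have h2 := congrFun h i0
          simp only [Pi.smul_apply, smul_eq_mul, Pi.zero_apply] at h2
          rcases Nat.mul_eq_zero.mp h2 with h3 | h3
          · omega
          · exact hi0 h3
        · rw [(hrs _ _ hlepc hokc).1, (hrs _ _ hlepc hokc).2, hperiod p hp (M + 1)]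
      have hrc : Λ.r lam = Λ.r (x p (p + (M + 1) • Λ.d mu)) := by
        rw [hrlam, (hrs _ _ hlepc hokc).1]
      obtain ⟨z, hz⟩ := hnoent _ hcyc lam hrc
      obtain ⟨hzd, ⟨α, hα1, hα2⟩, ⟨β, hβ1, hβ2⟩⟩ := hz
      have hzdeq : Λ.d z = (M + 1) • Λ.d mu := by
        rw [hzd, hdlam, hdc]
        exact sup_eq_right.mpr htN
      have hβ0 : Λ.d β = 0 := by
        have hcb := Λ.d_comp _ _ hβ1
        rw [hβ2, hzdeq, hdc] at hcb
        funext i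
        have h2 := congrFun hcb i
        simp only [Pi.add_apply, Pi.zero_apply] at h2 ⊢
        omega
      have hβv : β = Λ.s (x p (p + (M + 1) • Λ.d mu)) :=
        ((Λ.r_vertex β hβ0).symm).trans hβ1.symm
      have hzc : z = x p (p + (M + 1) • Λ.d mu) := by
        rw [← hβ2, hβv, Λ.comp_id]
      have hdfac : Λ.d (x p (p + (M + 1) • Λ.d mu)) = t + ((M + 1) • Λ.d mu - t) := by
        rw [hdc]
        funext i
        have := Pi.le_def.mp htN i
        simp only [Pi.add_apply, Pi.sub_apply] at *
        omega
      obtain ⟨P, hP, hPuniq⟩ := Λ.factor _ t ((M + 1) • Λ.d mu - t) hdfac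
      have hdα : Λ.d α = (M + 1) • Λ.d mu - t := by
        have hca := Λ.d_comp _ _ hα1
        rw [hα2, hzc, hdc, hdlam] at hca
        funext i
        have h2 := congrFun hca i
        simp only [Pi.add_apply, Pi.sub_apply] at h2 ⊢
        omega
      have h1 : (lam, α) = P := hPuniq _ ⟨hdlam, hdα, hα1, by rw [hα2, hzc]⟩
      have hlet : p ≤ p + t := Pi.le_def.mpr fun i => Nat.le_add_right _ _
      have hlet2 : p + t ≤ p + (M + 1) • Λ.d mu := add_le_add_right htN p
      have hokpt : ∀ i, ((p + t) i : ℕ∞) ≤ Λ.degInf mu i :=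
        okinf _ (fun i h => by simp [Pi.add_apply, hp i h, ht i h])
      have h2 : (x p (p + t), x (p + t) (p + (M + 1) • Λ.d mu)) = P := by
        apply hPuniq
        refine ⟨?_, ?_, ?_, ?_⟩
        · rw [hd _ _ hlet hokpt]
          funext i; simp only [Pi.sub_apply, Pi.add_apply]; omega
        · rw [hd _ _ hlet2 hokc]
          funext i; simp only [Pi.sub_apply, Pi.add_apply]; omega
        · rw [(hrs _ _ hlet hokpt).2, (hrs _ _ hlet2 hokc).1]
        · exact hcomp _ _ _ hlet hlet2 hokc
      exact congrArg Prod.fst (h1.trans h2.symm)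
  have hshift : ∀ p q t : Fin k → ℕ, (∀ i, Λ.d mu i = 0 → p i = 0) →
      (∀ i, Λ.d mu i = 0 → q i = 0) → (∀ i, Λ.d mu i = 0 → t i = 0) →
      x p p = x q q → x (p + t) (p + t) = x (q + t) (q + t) := by
    intro p q t hp hq ht hxy
    have hleq : q ≤ q + t := Pi.le_def.mpr fun i => Nat.le_add_right _ _
    have hokqt : ∀ i, ((q + t) i : ℕ∞) ≤ Λ.degInf mu i :=
      okinf _ (fun i h => by simp [Pi.add_apply, hq i h, ht i h])
    have hdq : Λ.d (x q (q + t)) = t := by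
      rw [hd _ _ hleq hokqt]
      funext i; simp only [Pi.sub_apply, Pi.add_apply]; omega
    have hrq : Λ.r (x q (q + t)) = x p p := by rw [(hrs _ _ hleq hokqt).1, hxy]
    have heq := huniq p t hp ht _ hrq hdq
    have hlep : p ≤ p + t := Pi.le_def.mpr fun i => Nat.le_add_right _ _
    have hokpt : ∀ i, ((p + t) i : ℕ∞) ≤ Λ.degInf mu i :=
      okinf _ (fun i h => by simp [Pi.add_apply, hp i h, ht i h])
    have hs := (hrs _ _ hleq hokqt).2
    rw [heq, (hrs _ _ hlep hokpt).2] at hs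
    exact hs
  let S : Set (Fin k → ℤ) :=
    {g | ∃ p q : Fin k → ℕ,
      (∀ i, (p i : ℕ∞) ≤ Λ.degInf mu i) ∧ (∀ i, (q i : ℕ∞) ≤ Λ.degInf mu i) ∧
      x p p = x q q ∧ g = fun i => (p i : ℤ) - (q i : ℤ)}
  have zero_mem : (0 : Fin k → ℤ) ∈ S :=
    ⟨0, 0, fun i => by simp, fun i => by simp, rfl, by funext i; simp⟩
  have add_mem : ∀ a b : Fin k → ℤ, a ∈ S → b ∈ S → a + b ∈ S := by
    rintro a b ⟨p, q, hp, hq, hpq, ha⟩ ⟨p', q', hp', hq', hpq', hb⟩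
    refine ⟨p + p', q + q', okinf _ (fun i h => by
        simp [Pi.add_apply, okOf p hp i h, okOf p' hp' i h]),
      okinf _ (fun i h => by simp [Pi.add_apply, okOf q hq i h, okOf q' hq' i h]), ?_, ?_⟩
    · have e1 := hshift p q p' (okOf p hp) (okOf q hq) (okOf p' hp') hpq
      have e2 := hshift p' q' q (okOf p' hp') (okOf q' hq') (okOf q hq) hpq'
      calc x (p + p') (p + p') = x (q + p') (q + p') := e1
        _ = x (p' + q) (p' + q) := by rw [add_comm]
        _ = x (q' + q) (q' + q) := e2
        _ = x (q + q') (q + q') := by rw [add_comm]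
    · rw [ha, hb]
      funext i
      simp only [Pi.add_apply]
      push_cast
      ring
  have neg_mem : ∀ a : Fin k → ℤ, a ∈ S → -a ∈ S := by
    rintro a ⟨p, q, hp, hq, hpq, ha⟩
    refine ⟨q, p, hq, hp, hpq.symm, ?_⟩
    rw [ha]
    funext i
    simp only [Pi.neg_apply]
    ring
  refine ⟨{ carrier := S
            zero_mem' := zero_mem
            add_mem' := fun {a b} ha hb => add_mem a b ha hb
            neg_mem' := fun {a} ha => neg_mem a ha }, rfl⟩
end

section
/- Let Λ be a k-graph such that Λ⁰ is finite and nonempty and Λ contains no cycles, i.e. no λ ∈ Λ ∖ Λ⁰ with r(λ) = s(λ). Then: (i) Λ^n = ∅ whenever |n| := Σ_{i=1}^k n_i satisfies |n| ≥ |Λ⁰|; (ii) there exists v ∈ Λ⁰ with vΛ = {v}; (iii) if moreover Λ is row-finite, then Λ is a finite set. -/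
open scoped ComplexOrder ENat

/-- Auxiliary: along any path of length `N` there is a chain of `N+1` vertices joined
by nontrivial paths. -/
lemma KGraph.chain_aux {k : ℕ} (Λ : KGraph k) :
    ∀ (N : ℕ) (lam : Λ.Path), ∑ i, Λ.d lam i = N →
      ∃ f : ℕ → Λ.Path, (∀ j ≤ N, Λ.IsVertex (f j)) ∧ f 0 = Λ.r lam ∧
        ∀ a b, a < b → b ≤ N →
          ∃ σ, Λ.d σ ≠ 0 ∧ Λ.r σ = f a ∧ Λ.s σ = f b := by
  intro N
  induction N with
  | zero =>
    intro lam _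
    exact ⟨fun _ => Λ.r lam, fun j _ => Λ.d_r lam, rfl, fun a b hab hb => by omega⟩
  | succ N ih =>
    intro lam hsum
    have hex : ∃ i, Λ.d lam i ≠ 0 := by
      by_contra h; push_neg at h
      simp [h] at hsum
    obtain ⟨i, hi⟩ := hex
    have hdec : Λ.d lam = Pi.single i 1 + (Λ.d lam - Pi.single i 1) := by
      funext j
      by_cases hji : j = i
      · subst hji; simp only [Pi.add_apply, Pi.sub_apply, Pi.single_eq_same]; omega
      · simp [Pi.single_eq_of_ne hji]
    obtain ⟨⟨mu, nu⟩, ⟨hdmu, hdnu, hs, hcomp⟩, -⟩ := Λ.factor lam _ _ hdec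
    have hdmu_ne : Λ.d mu ≠ 0 := by
      rw [hdmu]; intro h
      have := congrFun h i
      simp [Pi.single_eq_same] at this
    have hdlam : Λ.d lam = Λ.d mu + Λ.d nu := by
      rw [← hcomp]; exact Λ.d_comp mu nu hs
    have hsumnu : ∑ j, Λ.d nu j = N := by
      have h1 : ∑ j, Λ.d lam j = ∑ j, Λ.d mu j + ∑ j, Λ.d nu j := by
        rw [hdlam]; exact Finset.sum_add_distrib
      have h2 : ∑ j, Λ.d mu j = 1 := by
        rw [hdmu]; simp
      omega
    obtain ⟨f', hvert', hf0', hchain'⟩ := ih nu hsumnu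
    refine ⟨fun j => if j = 0 then Λ.r lam else f' (j - 1), ?_, by simp, ?_⟩
    · intro j hj
      by_cases hj0 : j = 0
      · simp [hj0, Λ.d_r, KGraph.IsVertex]
      · simp only [if_neg hj0]
        exact hvert' (j - 1) (by omega)
    · intro a b hab hb
      have hb0 : b ≠ 0 := by omega
      have hrmu : Λ.r mu = Λ.r lam := by
        rw [← hcomp]; exact (Λ.r_comp mu nu hs).symm ▸ rfl
      by_cases ha0 : a = 0
      · subst ha0
        by_cases hb1 : b = 1
        · refine ⟨mu, hdmu_ne, ?_, ?_⟩
          · simpa using hrmu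
          · subst hb1
            rw [hs]
            simp [hf0']
        · obtain ⟨σ', hdσ', hrσ', hsσ'⟩ := hchain' 0 (b - 1) (by omega) (by omega)
          have hcompat : Λ.s mu = Λ.r σ' := by rw [hs, ← hf0', ← hrσ']
          refine ⟨Λ.comp mu σ', ?_, ?_, ?_⟩
          · rw [Λ.d_comp mu σ' hcompat]
            intro h
            apply hdmu_ne
            funext j
            have := congrFun h j
            simp only [Pi.add_apply, Pi.zero_apply] at this ⊢
            omega
          · rw [Λ.r_comp mu σ' hcompat, hrmu]; simp
          · rw [Λ.s_comp mu σ' hcompat, hsσ']; simp [hb0]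
      · obtain ⟨σ, h1, h2, h3⟩ := hchain' (a - 1) (b - 1) (by omega) (by omega)
        exact ⟨σ, h1, by simp only [if_neg ha0]; exact h2,
          by simp only [if_neg hb0]; exact h3⟩

/-- Structural facts about `k`-graphs with finitely many vertices and no
cycles: (i) there are no paths of length `≥ |Λ⁰|`; (ii) there is a vertex `v` with
`vΛ = {v}`; (iii) if `Λ` is moreover row-finite then `Λ` is finite. -/
theorem stmt17 {k : ℕ} (Λ : KGraph k)
    (hfin : {v : Λ.Path | Λ.IsVertex v}.Finite)
    (hne : {v : Λ.Path | Λ.IsVertex v}.Nonempty)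
    (hnc : Λ.NoCycles) :
    (∀ n : Fin k → ℕ, {v : Λ.Path | Λ.IsVertex v}.ncard ≤ ∑ i, n i →
      ∀ lam : Λ.Path, Λ.d lam ≠ n) ∧
    (∃ v, Λ.IsSource v) ∧
    (Λ.RowFinite → Finite Λ.Path) := by
  set C := {v : Λ.Path | Λ.IsVertex v}.ncard with hC
  haveI : Finite ↥{v : Λ.Path | Λ.IsVertex v} := hfin.to_subtype
  have hi : ∀ n : Fin k → ℕ, C ≤ ∑ i, n i → ∀ lam : Λ.Path, Λ.d lam ≠ n := by
    intro n hn lam hd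
    obtain ⟨f, hvert, -, hchain⟩ := Λ.chain_aux (∑ i, Λ.d lam i) lam rfl
    set N := ∑ i, Λ.d lam i with hN
    have hNC : C ≤ N := by rw [hN, hd]; exact hn
    have hinj : ∀ a b, a < b → b ≤ N → f a ≠ f b := by
      intro a b hab hb hfe
      obtain ⟨σ, h1, h2, h3⟩ := hchain a b hab hb
      exact h1 (hnc σ (by rw [h2, h3, hfe]))
    have hginj : Function.Injective
        (fun j : Fin (N + 1) => (⟨f j, hvert j (by omega)⟩ :
          ↥{v : Λ.Path | Λ.IsVertex v})) := by
      intro a b hab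
      simp only [Subtype.mk.injEq] at hab
      rcases lt_trichotomy (a : ℕ) (b : ℕ) with h | h | h
      · exact absurd hab (hinj a b h (by omega))
      · exact Fin.ext h
      · exact absurd hab.symm (hinj b a h (by omega))
    have hcard := Nat.card_le_card_of_injective _ hginj
    rw [Nat.card_eq_fintype_card, Fintype.card_fin, Nat.card_coe_set_eq] at hcard
    omega
  have hsum_pos : ∀ p : Λ.Path, Λ.d p ≠ 0 → 1 ≤ ∑ i, Λ.d p i := by
    intro p hp
    obtain ⟨i, hi'⟩ := Function.ne_iff.mp hp
    calc 1 ≤ Λ.d p i := Nat.one_le_iff_ne_zero.mpr (by simpa using hi')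
    _ ≤ ∑ j, Λ.d p j := Finset.single_le_sum (fun j _ => Nat.zero_le _)
        (Finset.mem_univ i)
  refine ⟨hi, ?_, ?_⟩
  · -- existence of a source
    by_contra h
    push_neg at h
    have step : ∀ p : Λ.Path, ∃ q, Λ.r q = Λ.s p ∧ Λ.d q ≠ 0 := by
      intro p
      have hv : Λ.IsVertex (Λ.s p) := Λ.d_s p
      have hns := h (Λ.s p)
      rw [KGraph.IsSource] at hns
      push_neg at hns
      obtain ⟨lam, hr, hlam⟩ := hns hv
      refine ⟨lam, hr, fun h0 => hlam ?_⟩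
      rw [← Λ.r_vertex lam h0]
      exact hr
    choose nxt hnxt1 hnxt2 using step
    obtain ⟨v0, hv0⟩ := hne
    let seq : ℕ → Λ.Path := fun n => n.rec v0 (fun _ p => Λ.comp p (nxt p))
    have hgrow : ∀ n, n ≤ ∑ i, Λ.d (seq n) i := by
      intro n
      induction n with
      | zero => exact Nat.zero_le _
      | succ n ihn =>
        have hcomp : Λ.s (seq n) = Λ.r (nxt (seq n)) := (hnxt1 (seq n)).symm
        have : Λ.d (seq (n + 1)) = Λ.d (seq n) + Λ.d (nxt (seq n)) :=
          Λ.d_comp _ _ hcomp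
        rw [this]
        simp only [Pi.add_apply]
        rw [Finset.sum_add_distrib]
        have := hsum_pos _ (hnxt2 (seq n))
        omega
    exact hi (Λ.d (seq C)) (le_trans (hgrow C) le_rfl) (seq C) rfl
  · -- row-finite implies finite
    intro hrow
    rw [← Set.finite_univ_iff]
    have hNfin : {n : Fin k → ℕ | ∀ i, n i ≤ C}.Finite := by
      have := Set.Finite.pi (fun i : Fin k => Set.finite_Iic C)
      refine this.subset ?_
      intro n hn
      simp only [Set.mem_pi, Set.mem_univ, Set.mem_Iic, forall_true_left]
      exact fun i => hn i
    have hbig : ((Set.univ : Set Λ.Path) ⊆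
        ⋃ v ∈ {v : Λ.Path | Λ.IsVertex v}, ⋃ n ∈ {n : Fin k → ℕ | ∀ i, n i ≤ C},
          {lam : Λ.Path | Λ.r lam = v ∧ Λ.d lam = n}) := by
      intro lam _
      have h1 : Λ.IsVertex (Λ.r lam) := Λ.d_r lam
      have h2 : ∑ i, Λ.d lam i < C := by
        by_contra hle
        push_neg at hle
        exact hi _ hle lam rfl
      have h3 : ∀ i, Λ.d lam i ≤ C := by
        intro i
        have := Finset.single_le_sum (f := Λ.d lam)
          (fun j _ => Nat.zero_le _) (Finset.mem_univ i)
        omega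
      exact Set.mem_biUnion h1 (Set.mem_biUnion h3 ⟨rfl, rfl⟩)
    exact Set.Finite.subset
      (hfin.biUnion fun v hv => hNfin.biUnion fun n _ => hrow v n hv) hbig
end
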